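/- Let $V$ be a random subspace uniformly distributed on $\mathcal{G}_{k,d}(\mathbb{R})$ and $x \in S^{d-1}$. Then $\mathbb{E}\big(\tfrac{d^2}{k}\,\|P_V(x)\|^2\, P_V\big) = a P_x + b I$, where $a = \frac{2d(d-k)}{(d+2)(d-1)}$ and $b = \frac{d(kd+k-2)}{(d+2)(d-1)}$. -/

import Mathlib

open Matrix MeasureTheory

noncomputable section

instance matrixMeasurableSpace (m n : Type*) : MeasurableSpace (Matrix m n ℝ) :=
  MeasurableSpace.pi (X := fun _ : m => n → ℝ)

/-- `P` is the orthogonal projection matrix onto a `k`-dimensional subspace of `ℝ^d`. -/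
def IsProjOfDim (k d : ℕ) (P : Matrix (Fin d) (Fin d) ℝ) : Prop :=
  P.IsSymm ∧ P * P = P ∧ P.trace = (k : ℝ)

/-- `σ` is the invariant probability measure `σ_k` on the Grassmannian `G_{k,d}(ℝ)`,
realized as a measure on orthogonal projection matrices of rank `k`, invariant under
conjugation by orthogonal matrices. -/
def IsGrassmannUniform (k d : ℕ) (σ : Measure (Matrix (Fin d) (Fin d) ℝ)) : Prop :=
  IsProbabilityMeasure σ ∧ (∀ᵐ P ∂σ, IsProjOfDim k d P) ∧
    ∀ U ∈ Matrix.orthogonalGroup (Fin d) ℝ,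
      Measure.map (fun P => U * P * Uᵀ) σ = σ

/-- The rank-one orthogonal projector `P_x = x x^*` onto the line spanned by `x`. -/
def outerP (d : ℕ) (x : EuclideanSpace ℝ (Fin d)) : Matrix (Fin d) (Fin d) ℝ :=
  Matrix.vecMulVec ((WithLp.equiv 2 (Fin d → ℝ)) x) ((WithLp.equiv 2 (Fin d → ℝ)) x)

variable {d : ℕ}

lemma measurable_entry (i j : Fin d) :
    Measurable fun P : Matrix (Fin d) (Fin d) ℝ => P i j :=
  (measurable_pi_apply j).comp (measurable_pi_apply i)

lemma measurable_conj (U : Matrix (Fin d) (Fin d) ℝ) :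
    Measurable fun P : Matrix (Fin d) (Fin d) ℝ => U * P * Uᵀ := by
  apply measurable_pi_lambda _ fun i => measurable_pi_lambda _ fun j => ?_
  simp only [Matrix.mul_apply]
  apply Finset.measurable_sum _ fun l _ => ?_
  exact (Finset.measurable_sum _ fun m _ =>
    ((measurable_entry m l).const_mul _)).mul_const _


variable {k : ℕ}

lemma proj_symm_entry {P : Matrix (Fin d) (Fin d) ℝ} (hP : IsProjOfDim k d P)
    (i j : Fin d) : P j i = P i j := by
  conv_lhs => rw [← hP.1]
  rfl

lemma proj_diag {P : Matrix (Fin d) (Fin d) ℝ} (hP : IsProjOfDim k d P)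
    (i : Fin d) : P i i = ∑ b, (P i b) ^ 2 := by
  conv_lhs => rw [← hP.2.1]
  rw [Matrix.mul_apply]
  exact Finset.sum_congr rfl fun b _ => by rw [proj_symm_entry hP i b]; ring

lemma proj_entry_bound {P : Matrix (Fin d) (Fin d) ℝ} (hP : IsProjOfDim k d P)
    (i j : Fin d) : |P i j| ≤ 1 := by
  have h1 : (P i j) ^ 2 ≤ P i i := by
    rw [proj_diag hP i]
    exact Finset.single_le_sum (f := fun b => (P i b) ^ 2)
      (fun b _ => sq_nonneg _) (Finset.mem_univ j)
  have h2 : P i i ≤ 1 := by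
    have h3 : (P i i) ^ 2 ≤ P i i := by
      conv_rhs => rw [proj_diag hP i]
      exact Finset.single_le_sum (f := fun b => (P i b) ^ 2)
        (fun b _ => sq_nonneg _) (Finset.mem_univ i)
    nlinarith
  rw [abs_le]; constructor <;> nlinarith

lemma integ_pair {σ : Measure (Matrix (Fin d) (Fin d) ℝ)} (hσ : IsGrassmannUniform k d σ)
    (a b i j : Fin d) : Integrable (fun P => P a b * P i j) σ := by
  haveI := hσ.1
  apply Integrable.mono' (integrable_const 1)
    (((measurable_entry a b).mul (measurable_entry i j)).aestronglyMeasurable)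
  filter_upwards [hσ.2.1] with P hP
  rw [Real.norm_eq_abs, Pi.mul_apply, abs_mul]
  calc |P a b| * |P i j| ≤ 1 * 1 :=
        mul_le_mul (proj_entry_bound hP a b) (proj_entry_bound hP i j)
          (abs_nonneg _) zero_le_one
    _ = 1 := by ring

lemma integ_entry {σ : Measure (Matrix (Fin d) (Fin d) ℝ)} (hσ : IsGrassmannUniform k d σ)
    (i j : Fin d) : Integrable (fun P => P i j) σ := by
  haveI := hσ.1
  apply Integrable.mono' (integrable_const 1) (measurable_entry i j).aestronglyMeasurable
  filter_upwards [hσ.2.1] with P hP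
  exact proj_entry_bound hP i j

lemma inv_int {σ : Measure (Matrix (Fin d) (Fin d) ℝ)} (hσ : IsGrassmannUniform k d σ)
    {U : Matrix (Fin d) (Fin d) ℝ} (hU : U ∈ Matrix.orthogonalGroup (Fin d) ℝ)
    {g : Matrix (Fin d) (Fin d) ℝ → ℝ} (hg : Measurable g) :
    ∫ P, g (U * P * Uᵀ) ∂σ = ∫ P, g P ∂σ := by
  conv_rhs => rw [← hσ.2.2 U hU]
  rw [integral_map (measurable_conj U).aemeasurable hg.aestronglyMeasurable]

def signMat (d : ℕ) (t : Fin d) : Matrix (Fin d) (Fin d) ℝ :=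
  Matrix.diagonal (fun m => if m = t then -1 else 1)

lemma signMat_mem (t : Fin d) : signMat d t ∈ Matrix.orthogonalGroup (Fin d) ℝ := by
  rw [Matrix.mem_orthogonalGroup_iff]
  ext i j
  simp [signMat, Matrix.star_eq_conjTranspose, Matrix.diagonal_mul_diagonal,
    Matrix.diagonal_apply, Matrix.one_apply]
  split <;> simp_all <;> split <;> simp_all

lemma signMat_conj (t : Fin d) (P : Matrix (Fin d) (Fin d) ℝ) (i j : Fin d) :
    (signMat d t * P * (signMat d t)ᵀ) i j =
      ((if i = t then -1 else 1) * (if j = t then -1 else 1)) * P i j := by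
  rw [signMat, Matrix.diagonal_transpose, Matrix.mul_diagonal, Matrix.diagonal_mul]
  ring

lemma Mzero {σ : Measure (Matrix (Fin d) (Fin d) ℝ)} (hσ : IsGrassmannUniform k d σ)
    (a b i j t : Fin d)
    (h : ((if a = t then (-1:ℝ) else 1) * (if b = t then (-1:ℝ) else 1)) *
      ((if i = t then (-1:ℝ) else 1) * (if j = t then (-1:ℝ) else 1)) = -1) :
    ∫ P, P a b * P i j ∂σ = 0 := by
  have hg : Measurable fun P : Matrix (Fin d) (Fin d) ℝ => P a b * P i j :=
    (measurable_entry a b).mul (measurable_entry i j)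
  have key := inv_int hσ (signMat_mem t) hg
  have hpt : ∀ P : Matrix (Fin d) (Fin d) ℝ,
      (signMat d t * P * (signMat d t)ᵀ) a b * (signMat d t * P * (signMat d t)ᵀ) i j
        = -(P a b * P i j) := by
    intro P
    rw [signMat_conj, signMat_conj]
    linear_combination (P a b * P i j) * h
  simp only [hpt] at key
  rw [integral_neg] at key
  linarith

def permMat (d : ℕ) (e : Equiv.Perm (Fin d)) : Matrix (Fin d) (Fin d) ℝ :=
  fun i a => if e i = a then 1 else 0

lemma permMat_mem (e : Equiv.Perm (Fin d)) :
    permMat d e ∈ Matrix.orthogonalGroup (Fin d) ℝ := by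
  rw [Matrix.mem_orthogonalGroup_iff]
  ext i j
  simp only [Matrix.mul_apply, Matrix.star_eq_conjTranspose, Matrix.conjTranspose_apply,
    star_trivial, Matrix.transpose_apply, permMat, Matrix.one_apply, ite_mul, one_mul, zero_mul]
  rw [Finset.sum_ite_eq (Finset.univ) (e i) (fun a => if e j = a then (1:ℝ) else 0)]
  simp [EmbeddingLike.apply_eq_iff_eq, eq_comm]

lemma permMat_conj (e : Equiv.Perm (Fin d)) (P : Matrix (Fin d) (Fin d) ℝ) (i j : Fin d) :
    (permMat d e * P * (permMat d e)ᵀ) i j = P (e i) (e j) := by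
  simp only [Matrix.mul_apply, Matrix.transpose_apply, permMat, ite_mul, one_mul, zero_mul,
    mul_ite, mul_one, mul_zero]
  simp [Finset.sum_ite_eq]

lemma Mperm {σ : Measure (Matrix (Fin d) (Fin d) ℝ)} (hσ : IsGrassmannUniform k d σ)
    (e : Equiv.Perm (Fin d)) (a b i j : Fin d) :
    ∫ P, P a b * P i j ∂σ = ∫ P, P (e a) (e b) * P (e i) (e j) ∂σ := by
  have key := inv_int hσ (permMat_mem e)
    ((measurable_entry a b).mul (measurable_entry i j))
  simp only [Pi.mul_apply, permMat_conj] at key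
  exact key.symm

lemma Mperm1 {σ : Measure (Matrix (Fin d) (Fin d) ℝ)} (hσ : IsGrassmannUniform k d σ)
    (e : Equiv.Perm (Fin d)) (a b : Fin d) :
    ∫ P, P a b ∂σ = ∫ P, P (e a) (e b) ∂σ := by
  have key := inv_int hσ (permMat_mem e) (measurable_entry a b)
  simp only [permMat_conj] at key
  exact key.symm

lemma exists_perm {a i a' i' : Fin d} (h : a ≠ i) (h' : a' ≠ i') :
    ∃ e : Equiv.Perm (Fin d), e a = a' ∧ e i = i' := by
  refine ⟨(Equiv.swap a a').trans (Equiv.swap (Equiv.swap a a' i) i'), ?_, ?_⟩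
  · have h1 : Equiv.swap a a' a = a' := Equiv.swap_apply_left a a'
    have h2 : Equiv.swap a a' i ≠ a' := by
      intro hc
      apply h
      have h3 : Equiv.swap a a' i = Equiv.swap a a' a := by rw [hc, Equiv.swap_apply_left]
      exact (Equiv.injective _ h3).symm
    simp only [Equiv.trans_apply, h1]
    exact Equiv.swap_apply_of_ne_of_ne (Ne.symm h2) h'
  · simp only [Equiv.trans_apply]
    exact Equiv.swap_apply_left _ _

lemma sum_split {p q : Fin d} (hpq : p ≠ q) (f : Fin d → ℝ)
    (hf : ∀ m, m ≠ p → m ≠ q → f m = 0) : ∑ m, f m = f p + f q := by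
  rw [← Finset.sum_pair hpq]
  refine (Finset.sum_subset (Finset.subset_univ _) ?_).symm
  intro m _ hm
  simp only [Finset.mem_insert, Finset.mem_singleton, not_or] at hm
  exact hf m hm.1 hm.2

noncomputable def rotMat (d : ℕ) (p q : Fin d) : Matrix (Fin d) (Fin d) ℝ :=
  fun i j =>
    if i = p then (if j = p then Real.sqrt 2 / 2 else if j = q then Real.sqrt 2 / 2 else 0)
    else if i = q then
      (if j = p then -(Real.sqrt 2 / 2) else if j = q then Real.sqrt 2 / 2 else 0)
    else if i = j then 1 else 0

lemma hc2 : Real.sqrt 2 / 2 * (Real.sqrt 2 / 2) = 1 / 2 := by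
  rw [div_mul_div_comm, Real.mul_self_sqrt (by norm_num : (0:ℝ) ≤ 2)]
  norm_num

lemma rotMat_mem {p q : Fin d} (hpq : p ≠ q) :
    rotMat d p q ∈ Matrix.orthogonalGroup (Fin d) ℝ := by
  have epp : rotMat d p q p p = Real.sqrt 2 / 2 := by simp [rotMat]
  have epq : rotMat d p q p q = Real.sqrt 2 / 2 := by simp [rotMat, Ne.symm hpq]
  have eqp : rotMat d p q q p = -(Real.sqrt 2 / 2) := by simp [rotMat, Ne.symm hpq]
  have eqq : rotMat d p q q q = Real.sqrt 2 / 2 := by simp [rotMat, Ne.symm hpq]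
  have erow : ∀ j, j ≠ p → j ≠ q → rotMat d p q j p = 0 ∧ rotMat d p q j q = 0 := by
    intro j h1 h2
    constructor <;> simp [rotMat, h1, h2, Ne.symm h1, Ne.symm h2]
  rw [Matrix.mem_orthogonalGroup_iff]
  ext i j
  simp only [Matrix.mul_apply, Matrix.star_eq_conjTranspose, Matrix.conjTranspose_apply,
    star_trivial, Matrix.transpose_apply]
  have hsplit : ∀ a b : Fin d, (a = p ∨ a = q) →
      (∑ m, rotMat d p q a m * rotMat d p q b m) =
        rotMat d p q a p * rotMat d p q b p + rotMat d p q a q * rotMat d p q b q := by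
    intro a b ha
    refine sum_split hpq _ (fun m hm1 hm2 => ?_)
    have hz : rotMat d p q a m = 0 := by
      rcases ha with rfl | rfl <;> simp [rotMat, hm1, hm2, Ne.symm hpq]
    rw [hz, zero_mul]
  by_cases hip : i = p
  · rw [hsplit i j (Or.inl hip), hip]
    by_cases hjp : j = p
    · rw [hjp, epp, epq, Matrix.one_apply_eq]
      linear_combination 2 * hc2
    · by_cases hjq : j = q
      · rw [hjq, epp, eqp, epq, eqq, Matrix.one_apply_ne hpq]
        ring
      · rw [(erow j hjp hjq).1, (erow j hjp hjq).2,
          Matrix.one_apply_ne (fun h => hjp h.symm)]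
        ring
  · by_cases hiq : i = q
    · rw [hsplit i j (Or.inr hiq), hiq]
      by_cases hjp : j = p
      · rw [hjp, eqp, epp, eqq, epq, Matrix.one_apply_ne (Ne.symm hpq)]
        ring
      · by_cases hjq : j = q
        · rw [hjq, eqp, eqq, Matrix.one_apply_eq]
          linear_combination 2 * hc2
        · rw [(erow j hjp hjq).1, (erow j hjp hjq).2,
            Matrix.one_apply_ne (fun h => hjq h.symm)]
          ring
    · rw [Finset.sum_eq_single i (fun m _ hm => by
        have him : ¬ i = m := fun h => hm h.symm
        simp [rotMat, hip, hiq, him]) (by simp)]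
      simp only [rotMat, if_neg hip, if_neg hiq, if_pos rfl, one_mul, Matrix.one_apply]
      by_cases hjp : j = p
      · rw [hjp]
        simp [hip]
      · by_cases hjq : j = q
        · rw [hjq]
          simp [hiq]
        · simp [hjp, hjq, eq_comm]

lemma rot_conj_pp {p q : Fin d} (hpq : p ≠ q) (P : Matrix (Fin d) (Fin d) ℝ) :
    (rotMat d p q * P * (rotMat d p q)ᵀ) p p =
      (P p p + P p q + P q p + P q q) / 2 := by
  have epp : rotMat d p q p p = Real.sqrt 2 / 2 := by simp [rotMat]
  have epq : rotMat d p q p q = Real.sqrt 2 / 2 := by simp [rotMat, Ne.symm hpq]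
  have erowz : ∀ m, m ≠ p → m ≠ q → rotMat d p q p m = 0 := by
    intro m h1 h2; simp [rotMat, h1, h2]
  simp only [Matrix.mul_apply, Matrix.transpose_apply]
  rw [sum_split hpq (fun m => (∑ a, rotMat d p q p a * P a m) * rotMat d p q p m)
    (fun m hm1 hm2 => by simp [erowz m hm1 hm2]),
    sum_split hpq (fun a => rotMat d p q p a * P a p)
    (fun m hm1 hm2 => by simp [erowz m hm1 hm2]),
    sum_split hpq (fun a => rotMat d p q p a * P a q)
    (fun m hm1 hm2 => by simp [erowz m hm1 hm2]),
    epp, epq]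
  linear_combination (P p p + P p q + P q p + P q q) * hc2

lemma M1zero {σ : Measure (Matrix (Fin d) (Fin d) ℝ)} (hσ : IsGrassmannUniform k d σ)
    (a b : Fin d) (hab : a ≠ b) : ∫ P, P a b ∂σ = 0 := by
  have key := inv_int hσ (signMat_mem b) (measurable_entry a b)
  have hpt : ∀ P : Matrix (Fin d) (Fin d) ℝ,
      (signMat d b * P * (signMat d b)ᵀ) a b = -(P a b) := by
    intro P
    rw [signMat_conj]
    simp [hab]
  simp only [hpt] at key
  rw [integral_neg] at key
  linarith

lemma eqR_lemma {σ : Measure (Matrix (Fin d) (Fin d) ℝ)} (hσ : IsGrassmannUniform k d σ)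
    {p q : Fin d} (hpq : p ≠ q) :
    ∫ P, P p p * P p p ∂σ =
      ∫ P, P p p * P q q ∂σ + 2 * ∫ P, P p q * P p q ∂σ := by
  have key := inv_int hσ (rotMat_mem hpq) ((measurable_entry p p).mul (measurable_entry p p))
  simp only [Pi.mul_apply, rot_conj_pp hpq] at key
  have hae : (fun P : Matrix (Fin d) (Fin d) ℝ =>
      ((P p p + P p q + P q p + P q q) / 2) * ((P p p + P p q + P q p + P q q) / 2))
      =ᵐ[σ] (fun P : Matrix (Fin d) (Fin d) ℝ =>
      (1/4) * (P p p * P p p) + (P p q * P p q) + (1/4) * (P q q * P q q)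
        + (P p p * P p q) + (1/2) * (P p p * P q q) + (P p q * P q q)) := by
    filter_upwards [hσ.2.1] with P hP
    rw [proj_symm_entry hP p q]
    ring
  rw [integral_congr_ae hae] at key
  have i1 := (integ_pair hσ p p p p).const_mul (1/4 : ℝ)
  have i2 := integ_pair hσ p q p q
  have i3 := (integ_pair hσ q q q q).const_mul (1/4 : ℝ)
  have i4 := integ_pair hσ p p p q
  have i5 := (integ_pair hσ p p q q).const_mul (1/2 : ℝ)
  have i6 := integ_pair hσ p q q q
  have I2 : Integrable (fun P : Matrix (Fin d) (Fin d) ℝ =>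
      1/4 * (P p p * P p p) + P p q * P p q) σ := i1.add i2
  have I3 : Integrable (fun P : Matrix (Fin d) (Fin d) ℝ =>
      1/4 * (P p p * P p p) + P p q * P p q + 1/4 * (P q q * P q q)) σ := I2.add i3
  have I4 : Integrable (fun P : Matrix (Fin d) (Fin d) ℝ =>
      1/4 * (P p p * P p p) + P p q * P p q + 1/4 * (P q q * P q q) + P p p * P p q) σ :=
    I3.add i4
  have I5 : Integrable (fun P : Matrix (Fin d) (Fin d) ℝ =>
      1/4 * (P p p * P p p) + P p q * P p q + 1/4 * (P q q * P q q) + P p p * P p q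
        + 1/2 * (P p p * P q q)) σ := I4.add i5
  rw [integral_add I5 i6, integral_add I4 i5, integral_add I3 i4, integral_add I2 i3,
    integral_add i1 i2,
    integral_const_mul, integral_const_mul, integral_const_mul] at key
  have z1 : ∫ P, P p p * P p q ∂σ = 0 :=
    Mzero hσ p p p q q (by simp [hpq])
  have z2 : ∫ P, P p q * P q q ∂σ = 0 :=
    Mzero hσ p q q q p (by simp [hpq, Ne.symm hpq])
  have sw : ∫ P, P q q * P q q ∂σ = ∫ P, P p p * P p p ∂σ := by
    have := Mperm hσ (Equiv.swap q p) q q q q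
    simpa using this
  rw [z1, z2, sw] at key
  linarith

lemma proj_entry_eq_sum {P : Matrix (Fin d) (Fin d) ℝ} (hP : IsProjOfDim k d P)
    (a b : Fin d) : P a b = ∑ i, P i a * P i b := by
  conv_lhs => rw [← hP.2.1]
  rw [Matrix.mul_apply]
  exact Finset.sum_congr rfl fun i _ => by rw [proj_symm_entry hP a i]

lemma normsq {P : Matrix (Fin d) (Fin d) ℝ} (hP : IsProjOfDim k d P) (v : Fin d → ℝ) :
    ∑ a, ∑ b, v a * v b * P a b = ∑ c, (P.mulVec v c) ^ 2 := by
  calc ∑ a, ∑ b, v a * v b * P a b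
      = ∑ a, ∑ b, ∑ c, (P c a * v a) * (P c b * v b) := by
        refine Finset.sum_congr rfl fun a _ => Finset.sum_congr rfl fun b _ => ?_
        rw [proj_entry_eq_sum hP a b, Finset.mul_sum]
        exact Finset.sum_congr rfl fun c _ => by ring
    _ = ∑ c, ∑ a, ∑ b, (P c a * v a) * (P c b * v b) := by
        exact (Finset.sum_congr rfl fun a _ => Finset.sum_comm).trans Finset.sum_comm
    _ = ∑ c, (∑ a, P c a * v a) * (∑ b, P c b * v b) := by
        refine Finset.sum_congr rfl fun c _ => ?_
        rw [Finset.sum_mul_sum]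
    _ = ∑ c, (P.mulVec v c) ^ 2 := by
        refine Finset.sum_congr rfl fun c _ => ?_
        simp [Matrix.mulVec, dotProduct, sq]


/-- For a uniformly random `k`-dimensional subspace `V` of `ℝ^d` and a unit vector `x`,
`𝔼 ((d²/k) ‖P_V x‖² P_V) = a P_x + b I` (entrywise), with `a = 2d(d-k)/((d+2)(d-1))` and
`b = d(kd+k-2)/((d+2)(d-1))`. -/
theorem grassmann_weighted_projection_mean (d k : ℕ) (hk : 1 ≤ k) (hkd : k < d)
    (σ : Measure (Matrix (Fin d) (Fin d) ℝ)) (hσ : IsGrassmannUniform k d σ)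
    (x : EuclideanSpace ℝ (Fin d)) (hx : ‖x‖ = 1) :
    ∀ i j : Fin d,
      ∫ P, ((d : ℝ) ^ 2 / k * ‖Matrix.toEuclideanLin P x‖ ^ 2) * P i j ∂σ =
        ((2 * (d : ℝ) * (d - k) / ((d + 2) * (d - 1))) • outerP d x +
          ((d : ℝ) * ((k : ℝ) * d + k - 2) / ((d + 2) * (d - 1))) •
            (1 : Matrix (Fin d) (Fin d) ℝ)) i j := by
  intro i j
  haveI := hσ.1
  have hd2 : 2 ≤ d := by omega
  set p0 : Fin d := ⟨0, by omega⟩ with hp0def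
  set p1 : Fin d := ⟨1, by omega⟩ with hp1def
  have hp01 : p0 ≠ p1 := by simp [hp0def, hp1def, Fin.ext_iff]
  set v : Fin d → ℝ := ⇑(WithLp.equiv 2 (Fin d → ℝ)) x with hvdef
  have hvsum : ∑ a, v a ^ 2 = 1 := by
    have h := hx
    rw [EuclideanSpace.norm_eq] at h
    have h0 : (0:ℝ) ≤ ∑ a, ‖x a‖ ^ 2 := Finset.sum_nonneg fun a _ => sq_nonneg _
    have h2 : ∑ a, ‖x a‖ ^ 2 = 1 := by
      nlinarith [Real.sq_sqrt h0]
    simpa [hvdef, Real.norm_eq_abs, sq_abs] using h2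
  set α := ∫ P, P p0 p0 * P p1 p1 ∂σ with hαdef
  set β := ∫ P, P p0 p1 * P p0 p1 ∂σ with hβdef
  set γ := ∫ P, P p0 p0 * P p0 p0 ∂σ with hγdef
  set m := ∫ P, P p0 p0 ∂σ with hmdef
  have Fγ : ∀ a : Fin d, ∫ P, P a a * P a a ∂σ = γ := by
    intro a
    have h := Mperm hσ (Equiv.swap p0 a) p0 p0 p0 p0
    simpa [hγdef] using h.symm
  have Fm : ∀ a : Fin d, ∫ P, P a a ∂σ = m := by
    intro a
    have h := Mperm1 hσ (Equiv.swap p0 a) p0 p0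
    simpa [hmdef] using h.symm
  have Fα : ∀ a b : Fin d, a ≠ b → ∫ P, P a a * P b b ∂σ = α := by
    intro a b hab
    obtain ⟨e, he1, he2⟩ := exists_perm hp01 hab
    have h := Mperm hσ e p0 p0 p1 p1
    rw [he1, he2] at h
    exact h.symm
  have Fβ : ∀ a b : Fin d, a ≠ b → ∫ P, P a b * P a b ∂σ = β := by
    intro a b hab
    obtain ⟨e, he1, he2⟩ := exists_perm hp01 hab
    have h := Mperm hσ e p0 p1 p0 p1
    rw [he1, he2] at h
    exact h.symm
  have Fβ' : ∀ a b : Fin d, a ≠ b → ∫ P, P a b * P b a ∂σ = β := by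
    intro a b hab
    have hae : (fun P : Matrix (Fin d) (Fin d) ℝ => P a b * P b a)
        =ᵐ[σ] fun P => P a b * P a b := by
      filter_upwards [hσ.2.1] with P hP
      rw [proj_symm_entry hP a b]
    rw [integral_congr_ae hae]
    exact Fβ a b hab
  have eqR : γ = α + 2 * β := eqR_lemma hσ hp01
  have E0 : (d:ℝ) * m = k := by
    have h1 : ∫ P, (∑ a, P a a) ∂σ = (k:ℝ) := by
      rw [integral_congr_ae (g := fun _ => (k:ℝ)) ?_]
      · simp
      · filter_upwards [hσ.2.1] with P hP
        exact hP.2.2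
    rw [integral_finset_sum _ (fun a _ => integ_entry hσ a a)] at h1
    rw [Finset.sum_congr rfl (fun a _ => Fm a), Finset.sum_const, Finset.card_univ,
      Fintype.card_fin, nsmul_eq_mul] at h1
    exact h1
  have E1 : γ + ((d:ℝ) - 1) * β = m := by
    have h1 : ∫ P, (∑ b, P p0 b * P b p0) ∂σ = m := by
      rw [integral_congr_ae (g := fun P : Matrix (Fin d) (Fin d) ℝ => P p0 p0) ?_]
      · filter_upwards [hσ.2.1] with P hP
        have h2 : (P * P) p0 p0 = P p0 p0 := by rw [hP.2.1]
        rw [← h2, Matrix.mul_apply]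
    rw [integral_finset_sum _ (fun b _ => integ_pair hσ p0 b b p0)] at h1
    rw [← Finset.sum_erase_add _ _ (Finset.mem_univ p0)] at h1
    have hrest : ∑ b ∈ Finset.univ.erase p0, ∫ P, P p0 b * P b p0 ∂σ = ((d:ℝ) - 1) * β := by
      rw [Finset.sum_congr rfl (fun b hb => Fβ' p0 b (Ne.symm (Finset.ne_of_mem_erase hb))),
        Finset.sum_const, Finset.card_erase_of_mem (Finset.mem_univ p0), Finset.card_univ,
        Fintype.card_fin, nsmul_eq_mul]
      congr 1
      push_cast [Nat.cast_sub (by omega : 1 ≤ d)]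
      ring
    rw [hrest] at h1
    have hdiag : ∫ P, P p0 p0 * P p0 p0 ∂σ = γ := Fγ p0
    rw [hdiag] at h1
    linarith
  have E2 : γ + ((d:ℝ) - 1) * α = (k:ℝ) * m := by
    have h1 : ∫ P, (∑ a, P a a * P p0 p0) ∂σ = (k:ℝ) * m := by
      rw [integral_congr_ae (g := fun P : Matrix (Fin d) (Fin d) ℝ => (k:ℝ) * P p0 p0) ?_]
      · rw [integral_const_mul]
      · filter_upwards [hσ.2.1] with P hP
        have ht : ∑ a, P a a = (k:ℝ) := hP.2.2
        rw [← Finset.sum_mul, ht]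
    rw [integral_finset_sum _ (fun a _ => integ_pair hσ a a p0 p0)] at h1
    rw [← Finset.sum_erase_add _ _ (Finset.mem_univ p0)] at h1
    have hrest : ∑ a ∈ Finset.univ.erase p0, ∫ P, P a a * P p0 p0 ∂σ = ((d:ℝ) - 1) * α := by
      rw [Finset.sum_congr rfl (fun a ha => Fα a p0 (Finset.ne_of_mem_erase ha)),
        Finset.sum_const, Finset.card_erase_of_mem (Finset.mem_univ p0), Finset.card_univ,
        Fintype.card_fin, nsmul_eq_mul]
      congr 1
      push_cast [Nat.cast_sub (by omega : 1 ≤ d)]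
      ring
    rw [hrest, Fγ p0] at h1
    linarith
  have hMform : ∀ a b : Fin d, ∫ P, P a b * P i j ∂σ =
      α * (if a = b then (1:ℝ) else 0) * (if i = j then (1:ℝ) else 0)
        + β * ((if a = i then (1:ℝ) else 0) * (if b = j then (1:ℝ) else 0)
             + (if a = j then (1:ℝ) else 0) * (if b = i then (1:ℝ) else 0)) := by
    intro a b
    by_cases hab : a = b
    · subst hab
      by_cases hij : i = j
      · subst hij
        by_cases hai : a = i
        · subst hai
          rw [Fγ a, eqR]
          split_ifs with h
          · ring
          · exact absurd rfl h
        · rw [Fα a i hai]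
          simp [hai]
      · have h0 : ∫ P, P a a * P i j ∂σ = 0 := by
          by_cases hai : a = i
          · subst hai
            exact Mzero hσ a a a j j (by simp [hij])
          · by_cases haj : a = j
            · subst haj
              exact Mzero hσ a a i a i (by simp [hai, Ne.symm hai])
            · exact Mzero hσ a a i j j (by simp [haj, hij])
        rw [h0]
        by_cases hai : a = i <;> by_cases haj : a = j <;> simp_all
    · by_cases hij : i = j
      · subst hij
        have h0 : ∫ P, P a b * P i i ∂σ = 0 := by
          by_cases hai : a = i
          · subst hai
            exact Mzero hσ a b a a b (by simp [hab])
          · exact Mzero hσ a b i i a (by simp [Ne.symm hab, Ne.symm hai])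
        rw [h0]
        by_cases hai : a = i <;> by_cases hbi : b = i <;> simp_all
      · by_cases hai : a = i
        · subst hai
          by_cases hbj : b = j
          · subst hbj
            rw [Fβ a b hab]
            simp [hab, hij]
          · have h0 := Mzero hσ a b a j b (by simp [hab, Ne.symm hbj])
            rw [h0]
            simp [hab, hij, hbj]
        · by_cases haj : a = j
          · subst haj
            by_cases hbi : b = i
            · subst hbi
              rw [Fβ' a b hab]
              simp [hab, hai, Ne.symm hab]
            · have h0 := Mzero hσ a b i a b
                (by simp [hab, Ne.symm hbi])
              rw [h0]
              simp [hab, hai, hbi]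
          · have h0 := Mzero hσ a b i j a
              (by simp [Ne.symm hab, Ne.symm hai, Ne.symm haj])
            rw [h0]
            simp [hai, haj, hij, hab]
  have key : ∫ P, ((d : ℝ) ^ 2 / k * ‖Matrix.toEuclideanLin P x‖ ^ 2) * P i j ∂σ
      = ∑ a, ∑ b, ((d:ℝ)^2/k * (v a * v b)) * ∫ P, P a b * P i j ∂σ := by
    have hae : (fun P : Matrix (Fin d) (Fin d) ℝ =>
        ((d : ℝ) ^ 2 / k * ‖Matrix.toEuclideanLin P x‖ ^ 2) * P i j) =ᵐ[σ]
        (fun P => ∑ a, ∑ b, ((d:ℝ)^2/k * (v a * v b)) * (P a b * P i j)) := by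
      filter_upwards [hσ.2.1] with P hP
      have h1 : ‖Matrix.toEuclideanLin P x‖ ^ 2 = ∑ c, (P.mulVec v c) ^ 2 := by
        rw [EuclideanSpace.norm_eq,
          Real.sq_sqrt (Finset.sum_nonneg fun c _ => sq_nonneg _)]
        refine Finset.sum_congr rfl fun c _ => ?_
        rw [Real.norm_eq_abs, sq_abs]
        rfl
      rw [h1, ← normsq hP v, Finset.mul_sum, Finset.sum_mul]
      refine Finset.sum_congr rfl fun a _ => ?_
      rw [Finset.mul_sum, Finset.sum_mul]
      refine Finset.sum_congr rfl fun b _ => ?_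
      ring
    rw [integral_congr_ae hae,
      integral_finset_sum _ (fun a _ => integrable_finset_sum _
        (fun b _ => (integ_pair hσ a b i j).const_mul _))]
    refine Finset.sum_congr rfl fun a _ => ?_
    rw [integral_finset_sum _ (fun b _ => (integ_pair hσ a b i j).const_mul _)]
    exact Finset.sum_congr rfl fun b _ => integral_const_mul _ _
  rw [key]
  have hfinal : ∑ a, ∑ b, ((d:ℝ)^2/k * (v a * v b)) * ∫ P, P a b * P i j ∂σ
      = ((d:ℝ)^2/k * α) * (if i = j then 1 else 0)
        + 2 * ((d:ℝ)^2/k * β) * (v i * v j) := by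
    have hinner : ∀ a : Fin d, ∑ b, ((d:ℝ)^2/k * (v a * v b)) * ∫ P, P a b * P i j ∂σ =
        ((d:ℝ)^2/k) * (v a * v a) * α * (if i = j then (1:ℝ) else 0)
          + ((d:ℝ)^2/k) * β * ((if a = i then (1:ℝ) else 0) * (v a * v j)
            + (if a = j then (1:ℝ) else 0) * (v a * v i)) := by
      intro a
      have hsummand : ∀ b : Fin d, ((d:ℝ)^2/k * (v a * v b)) * ∫ P, P a b * P i j ∂σ =
          (if a = b then ((d:ℝ)^2/k) * (v a * v b) * α * (if i = j then (1:ℝ) else 0) else 0)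
            + ((if b = j then ((d:ℝ)^2/k) * (v a * v b) * β * (if a = i then (1:ℝ) else 0)
                else 0)
              + (if b = i then ((d:ℝ)^2/k) * (v a * v b) * β * (if a = j then (1:ℝ) else 0)
                else 0)) := by
        intro b
        rw [hMform a b]
        split_ifs <;> ring
      rw [Finset.sum_congr rfl (fun b _ => hsummand b), Finset.sum_add_distrib,
        Finset.sum_ite_eq, Finset.sum_add_distrib, Finset.sum_ite_eq', Finset.sum_ite_eq']
      simp only [Finset.mem_univ, if_true]
      ring
    rw [Finset.sum_congr rfl (fun a _ => hinner a), Finset.sum_add_distrib]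
    have hs1 : ∑ a, ((d:ℝ)^2/k) * (v a * v a) * α * (if i = j then (1:ℝ) else 0)
        = ((d:ℝ)^2/k * α) * (if i = j then 1 else 0) := by
      rw [Finset.sum_congr rfl (fun a _ => show
          ((d:ℝ)^2/k) * (v a * v a) * α * (if i = j then (1:ℝ) else 0)
            = (v a ^ 2) * (((d:ℝ)^2/k * α) * (if i = j then (1:ℝ) else 0)) from by ring),
        ← Finset.sum_mul, hvsum, one_mul]
    have hs2 : ∑ a, ((d:ℝ)^2/k) * β * ((if a = i then (1:ℝ) else 0) * (v a * v j)
          + (if a = j then (1:ℝ) else 0) * (v a * v i))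
        = 2 * ((d:ℝ)^2/k * β) * (v i * v j) := by
      rw [Finset.sum_congr rfl (fun a _ => show
          ((d:ℝ)^2/k) * β * ((if a = i then (1:ℝ) else 0) * (v a * v j)
            + (if a = j then (1:ℝ) else 0) * (v a * v i))
          = (if a = i then ((d:ℝ)^2/k) * β * (v a * v j) else 0)
            + (if a = j then ((d:ℝ)^2/k) * β * (v a * v i) else 0) from by
          split_ifs <;> ring),
        Finset.sum_add_distrib, Finset.sum_ite_eq', Finset.sum_ite_eq']
      simp only [Finset.mem_univ, if_true]
      ring
    rw [hs1, hs2]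
  rw [hfinal]
  have hk0 : (k:ℝ) ≠ 0 := Nat.cast_ne_zero.mpr (by omega)
  have hdr : (2:ℝ) ≤ (d:ℝ) := by exact_mod_cast hd2
  have hd1 : (d:ℝ) - 1 ≠ 0 := by intro h; linarith
  have hd2' : (d:ℝ) + 2 ≠ 0 := by intro h; linarith
  have hd0 : (d:ℝ) ≠ 0 := by intro h; linarith
  have hβv : ((d:ℝ)-1)*((d:ℝ)+2)*β = ((d:ℝ)-k)*m := by
    linear_combination (d:ℝ)*E1 - E2 - ((d:ℝ)-1)*eqR
  have hαv : ((d:ℝ)-1)*((d:ℝ)+2)*α = ((k:ℝ)*d+k-2)*m := by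
    linear_combination (((d:ℝ)-1)*((d:ℝ)+2))*E1 - (((d:ℝ)-1)*((d:ℝ)+2))*eqR
      - ((d:ℝ)+1)*hβv
  have hb : (d:ℝ)^2/k * α = (d : ℝ) * ((k : ℝ) * d + k - 2) / (((d:ℝ) + 2) * ((d:ℝ) - 1)) := by
    rw [div_mul_eq_mul_div, eq_div_iff (mul_ne_zero hd2' hd1), div_mul_eq_mul_div, div_eq_iff hk0]
    linear_combination (d:ℝ)^2*hαv + ((k:ℝ)*d+k-2)*(d:ℝ)*E0
  have ha : 2 * ((d:ℝ)^2/k * β) = 2 * (d : ℝ) * ((d:ℝ) - k) / (((d:ℝ) + 2) * ((d:ℝ) - 1)) := by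
    rw [div_mul_eq_mul_div, eq_div_iff (mul_ne_zero hd2' hd1), mul_div_assoc', div_mul_eq_mul_div,
      div_eq_iff hk0]
    linear_combination 2*(d:ℝ)^2*hβv + 2*((d:ℝ)-k)*(d:ℝ)*E0
  rw [hb, ha]
  simp only [Matrix.add_apply, Matrix.smul_apply, outerP, Matrix.vecMulVec_apply,
    Matrix.one_apply, smul_eq_mul, ← hvdef]
  split_ifs <;> ring
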